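/- arXiv:2104.10904 — 7 statements merged into one kernel-verified Lean document; each statement's English description precedes it below -/
import Mathlib

section
/- With 0 < a₁ ≤ ⋯ ≤ aₙ, b > 0, c₀ = ∏ᵢ aᵢ/(aᵢ+2b), and g(ψ) := −(ψⁿ − c₀∏ᵢ(ψ+2b/aᵢ)) / (2(ψ^{n−1} − c₀∏_{i=2}ⁿ(ψ+2b/aᵢ))), one has g(1) = 0, g(ψ) < 0 for all ψ > 1, and ψ = 1 is the unique root of g in [1, ∞). -/
theorem g_sign_and_unique_root {n : ℕ} (hn : 0 < n) (a : Fin n → ℝ) (b c0 : ℝ)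
    (ha : ∀ i, 0 < a i) (hmono : Monotone a) (hb : 0 < b)
    (hc0 : c0 = ∏ i, a i / (a i + 2 * b)) (g : ℝ → ℝ)
    (hg : ∀ ψ, g ψ = -((ψ ^ n - c0 * ∏ i, (ψ + 2 * b / a i))
        / (2 * (ψ ^ (n - 1)
          - c0 * ∏ i ∈ Finset.univ.erase (⟨0, hn⟩ : Fin n), (ψ + 2 * b / a i))))) :
    g 1 = 0 ∧ (∀ ψ, 1 < ψ → g ψ < 0)
      ∧ (∀ ψ, 1 ≤ ψ → g ψ = 0 → ψ = 1) := by
  have ha2 : ∀ i, 0 < a i + 2 * b := fun i => by have := ha i; positivity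
  have hprod : ∀ (s : Finset (Fin n)) (ψ : ℝ),
      (∏ i ∈ s, a i / (a i + 2 * b)) * ∏ i ∈ s, (ψ + 2 * b / a i)
        = ∏ i ∈ s, (a i * ψ + 2 * b) / (a i + 2 * b) := by
    intro s ψ
    rw [← Finset.prod_mul_distrib]
    refine Finset.prod_congr rfl fun i _ => ?_
    rw [eq_div_iff (ha2 i).ne']
    field_simp [(ha i).ne', (ha2 i).ne']
  set i0 : Fin n := ⟨0, hn⟩
  -- g 1 = 0
  have h1 : g 1 = 0 := by
    rw [hg 1]
    have : c0 * ∏ i, ((1:ℝ) + 2 * b / a i) = 1 := by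
      rw [hc0, hprod]
      rw [Finset.prod_eq_one]
      intro i _
      rw [mul_one, div_self (ha2 i).ne']
    rw [this, one_pow, sub_self, zero_div, neg_zero]
  -- negativity for ψ > 1
  have hneg : ∀ ψ, 1 < ψ → g ψ < 0 := by
    intro ψ hψ
    have hψ0 : 0 < ψ := lt_trans one_pos hψ
    have hfac_pos : ∀ i : Fin n, 0 < (a i * ψ + 2 * b) / (a i + 2 * b) := by
      intro i
      have h1 := ha i; have h2 := ha2 i
      positivity
    have hfac_lt : ∀ i : Fin n, (a i * ψ + 2 * b) / (a i + 2 * b) < ψ := by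
      intro i
      rw [div_lt_iff₀ (ha2 i)]
      nlinarith [ha i, hb]
    have hnum : c0 * ∏ i, (ψ + 2 * b / a i) < ψ ^ n := by
      rw [hc0, hprod]
      calc ∏ i, (a i * ψ + 2 * b) / (a i + 2 * b)
          < ∏ _i : Fin n, ψ := by
            apply Finset.prod_lt_prod_of_nonempty
            · intro i _; exact hfac_pos i
            · intro i _; exact hfac_lt i
            · exact Finset.univ_nonempty_iff.mpr ⟨i0⟩
        _ = ψ ^ n := by rw [Finset.prod_const, Finset.card_univ, Fintype.card_fin]
    have hden : c0 * ∏ i ∈ Finset.univ.erase i0, (ψ + 2 * b / a i) < ψ ^ (n - 1) := by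
      have hc0' : c0 = a i0 / (a i0 + 2 * b) *
          ∏ i ∈ Finset.univ.erase i0, a i / (a i + 2 * b) := by
        rw [hc0]
        exact (Finset.mul_prod_erase _ _ (Finset.mem_univ i0)).symm
      rw [hc0', mul_assoc, hprod]
      have hr : a i0 / (a i0 + 2 * b) < 1 := by
        rw [div_lt_one (ha2 i0)]
        nlinarith [hb]
      have hppos : 0 < ∏ i ∈ Finset.univ.erase i0, (a i * ψ + 2 * b) / (a i + 2 * b) :=
        Finset.prod_pos fun i _ => hfac_pos i
      have hple : ∏ i ∈ Finset.univ.erase i0, (a i * ψ + 2 * b) / (a i + 2 * b)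
          ≤ ψ ^ (n - 1) := by
        calc ∏ i ∈ Finset.univ.erase i0, (a i * ψ + 2 * b) / (a i + 2 * b)
            ≤ ∏ _i ∈ Finset.univ.erase i0, ψ := by
              apply Finset.prod_le_prod
              · intro i _; exact (hfac_pos i).le
              · intro i _; exact (hfac_lt i).le
          _ = ψ ^ (n - 1) := by
              rw [Finset.prod_const, Finset.card_erase_of_mem (Finset.mem_univ i0),
                Finset.card_univ, Fintype.card_fin]
      calc a i0 / (a i0 + 2 * b) *
            ∏ i ∈ Finset.univ.erase i0, (a i * ψ + 2 * b) / (a i + 2 * b)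
          < 1 * ∏ i ∈ Finset.univ.erase i0, (a i * ψ + 2 * b) / (a i + 2 * b) :=
            mul_lt_mul_of_pos_right hr hppos
        _ = ∏ i ∈ Finset.univ.erase i0, (a i * ψ + 2 * b) / (a i + 2 * b) := one_mul _
        _ ≤ ψ ^ (n - 1) := hple
    rw [hg ψ]
    have hN : 0 < ψ ^ n - c0 * ∏ i, (ψ + 2 * b / a i) := sub_pos.mpr hnum
    have hD : 0 < 2 * (ψ ^ (n - 1) - c0 * ∏ i ∈ Finset.univ.erase i0, (ψ + 2 * b / a i)) := by
      have := sub_pos.mpr hden; linarith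
    simpa using div_pos hN hD
  refine ⟨h1, hneg, fun ψ hψ hgψ => ?_⟩
  rcases eq_or_lt_of_le hψ with h | h
  · exact h.symm
  · exact absurd hgψ (ne_of_lt (hneg ψ h))
end

section
/- With notation as above, the derivative of g at ψ = 1 equals g′(1) = −(1/2)·Σᵢ₌₁ⁿ (a₁+2b)/(aᵢ+2b). In particular, if Σᵢ (a₁+2b)/(aᵢ+2b) > 2, then g′(1) < −1. -/
theorem deriv_g_at_one {n : ℕ} (hn : 0 < n) (a : Fin n → ℝ) (b c0 : ℝ)
    (ha : ∀ i, 0 < a i) (hmono : Monotone a) (hb : 0 < b)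
    (hc0 : c0 = ∏ i, a i / (a i + 2 * b)) (g : ℝ → ℝ)
    (hg : ∀ ψ, g ψ = -((ψ ^ n - c0 * ∏ i, (ψ + 2 * b / a i))
        / (2 * (ψ ^ (n - 1)
          - c0 * ∏ i ∈ Finset.univ.erase (⟨0, hn⟩ : Fin n), (ψ + 2 * b / a i))))) :
    deriv g 1 = -(1 / 2) * ∑ i, (a ⟨0, hn⟩ + 2 * b) / (a i + 2 * b)
      ∧ ((2 < ∑ i, (a ⟨0, hn⟩ + 2 * b) / (a i + 2 * b)) → deriv g 1 < -1) := by
  set i0 : Fin n := ⟨0, hn⟩ with hi0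
  have hane : ∀ i, a i ≠ 0 := fun i => (ha i).ne'
  have habp : ∀ i, 0 < a i + 2 * b := fun i => by nlinarith [ha i]
  have habne : ∀ i, a i + 2 * b ≠ 0 := fun i => (habp i).ne'
  have hPval : ∀ i, (1:ℝ) + 2 * b / a i = (a i + 2 * b) / a i := fun i => by
    rw [add_div, div_self (hane i)]
  have hPne : ∀ i, (1:ℝ) + 2 * b / a i ≠ 0 := fun i => by
    rw [hPval]; exact div_ne_zero (habne i) (hane i)
  have hprod : c0 * ∏ i, ((1:ℝ) + 2 * b / a i) = 1 := by
    rw [hc0, ← Finset.prod_mul_distrib]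
    rw [Finset.prod_congr rfl (fun i _ =>
      show a i / (a i + 2 * b) * ((1:ℝ) + 2 * b / a i) = 1 by
        rw [hPval, div_mul_div_comm, mul_comm (a i + 2 * b) (a i)]
        exact div_self (mul_ne_zero (hane i) (habne i)))]
    simp
  have herase : ∀ i, c0 * ∏ j ∈ Finset.univ.erase i, ((1:ℝ) + 2 * b / a j)
      = a i / (a i + 2 * b) := by
    intro i
    have h1 : ((1:ℝ) + 2 * b / a i) * ∏ j ∈ Finset.univ.erase i, ((1:ℝ) + 2 * b / a j)
        = ∏ j, ((1:ℝ) + 2 * b / a j) :=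
      Finset.mul_prod_erase Finset.univ (fun j => (1:ℝ) + 2 * b / a j) (Finset.mem_univ i)
    have h2 : c0 * ∏ j ∈ Finset.univ.erase i, ((1:ℝ) + 2 * b / a j)
        = (c0 * ∏ j, ((1:ℝ) + 2 * b / a j)) / ((1:ℝ) + 2 * b / a i) := by
      rw [← h1]; field_simp [hPne i]
    rw [h2, hprod, hPval, one_div, inv_div]
  -- derivatives
  have hfac : ∀ i : Fin n, HasDerivAt (fun ψ : ℝ => ψ + 2 * b / a i) 1 1 :=
    fun i => (hasDerivAt_id 1).add_const _
  have hprodD : HasDerivAt (fun ψ : ℝ => ∏ i, (ψ + 2 * b / a i))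
      (∑ i, (∏ j ∈ Finset.univ.erase i, ((1:ℝ) + 2 * b / a j)) • (1:ℝ)) 1 :=
    HasDerivAt.fun_finsetProd (fun i _ => hfac i)
  have hproderaseD : HasDerivAt
      (fun ψ : ℝ => ∏ i ∈ Finset.univ.erase i0, (ψ + 2 * b / a i))
      (∑ i ∈ Finset.univ.erase i0,
        (∏ j ∈ (Finset.univ.erase i0).erase i, ((1:ℝ) + 2 * b / a j)) • (1:ℝ)) 1 :=
    HasDerivAt.fun_finsetProd (fun i _ => hfac i)
  set N' : ℝ := ↑n * 1 ^ (n - 1) -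
      c0 * ∑ i, (∏ j ∈ Finset.univ.erase i, ((1:ℝ) + 2 * b / a j)) • (1:ℝ) with hN'
  set D' : ℝ := ↑(n-1) * 1 ^ (n - 1 - 1) -
      c0 * ∑ i ∈ Finset.univ.erase i0,
        (∏ j ∈ (Finset.univ.erase i0).erase i, ((1:ℝ) + 2 * b / a j)) • (1:ℝ) with hD'
  have hN : HasDerivAt (fun ψ : ℝ => ψ ^ n - c0 * ∏ i, (ψ + 2 * b / a i)) N' 1 :=
    (hasDerivAt_pow n 1).sub (hprodD.const_mul c0)
  have hD : HasDerivAt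
      (fun ψ : ℝ => ψ ^ (n-1) - c0 * ∏ i ∈ Finset.univ.erase i0, (ψ + 2 * b / a i)) D' 1 :=
    (hasDerivAt_pow (n-1) 1).sub (hproderaseD.const_mul c0)
  have hterm : ∀ i, (1:ℝ) - a i / (a i + 2 * b) = 2 * b / (a i + 2 * b) := fun i => by
    rw [eq_div_iff (habne i), sub_mul, one_mul, div_mul_cancel₀ _ (habne i)]; ring
  -- values at 1
  have hN1 : (1:ℝ) ^ n - c0 * ∏ i, ((1:ℝ) + 2 * b / a i) = 0 := by
    rw [hprod, one_pow]; ring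
  have hD1 : (1:ℝ) ^ (n-1) - c0 * ∏ i ∈ Finset.univ.erase i0, ((1:ℝ) + 2 * b / a i)
      = 2 * b / (a i0 + 2 * b) := by
    rw [herase i0, one_pow]
    exact hterm i0
  have hD1ne : (2:ℝ) * ((1:ℝ) ^ (n-1)
      - c0 * ∏ i ∈ Finset.univ.erase i0, ((1:ℝ) + 2 * b / a i)) ≠ 0 := by
    rw [hD1]
    exact ne_of_gt (mul_pos two_pos (div_pos (by positivity) (habp i0)))
  -- derivative value N'
  have hN'val : N' = ∑ i, 2 * b / (a i + 2 * b) := by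
    rw [hN']
    simp only [smul_eq_mul, mul_one, one_pow, Finset.mul_sum]
    rw [Finset.sum_congr rfl (fun i _ => herase i)]
    have hns : (n:ℝ) = ∑ _i : Fin n, (1:ℝ) := by simp
    rw [hns, ← Finset.sum_sub_distrib]
    exact Finset.sum_congr rfl (fun i _ => hterm i)
  -- deriv of g
  have hM : HasDerivAt (fun ψ : ℝ =>
      2 * (ψ ^ (n-1) - c0 * ∏ i ∈ Finset.univ.erase i0, (ψ + 2 * b / a i))) (2 * D') 1 :=
    hD.const_mul 2
  have hgeq : g = fun ψ : ℝ => -((ψ ^ n - c0 * ∏ i, (ψ + 2 * b / a i))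
      / (2 * (ψ ^ (n - 1) - c0 * ∏ i ∈ Finset.univ.erase i0, (ψ + 2 * b / a i)))) :=
    funext hg
  have hgD : HasDerivAt g
      (-((N' * (2 * ((1:ℝ) ^ (n-1) - c0 * ∏ i ∈ Finset.univ.erase i0, ((1:ℝ) + 2 * b / a i)))
        - ((1:ℝ) ^ n - c0 * ∏ i, ((1:ℝ) + 2 * b / a i)) * (2 * D'))
        / (2 * ((1:ℝ) ^ (n-1) - c0 * ∏ i ∈ Finset.univ.erase i0, ((1:ℝ) + 2 * b / a i))) ^ 2)) 1 := by
    rw [hgeq]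
    exact (hN.div hM hD1ne).neg
  have key : deriv g 1 = -(1 / 2) * ∑ i, (a i0 + 2 * b) / (a i + 2 * b) := by
    rw [hgD.deriv, hN1, hD1, hN'val]
    have hS : ∑ i, (a i0 + 2 * b) / (a i + 2 * b)
        = (a i0 + 2 * b) / (2 * b) * ∑ i, 2 * b / (a i + 2 * b) := by
      rw [Finset.mul_sum]
      refine Finset.sum_congr rfl (fun i _ => ?_)
      rw [div_mul_div_comm, mul_comm (2*b) (a i + 2*b),
        mul_div_mul_right _ _ (by positivity : (2:ℝ)*b ≠ 0)]
    rw [hS]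
    have hb2 : (2:ℝ) * b ≠ 0 := by positivity
    set S := ∑ i : Fin n, 2 * b / (a i + 2 * b) with hSdef
    field_simp [habne i0]
    ring
  exact ⟨key, fun h => by rw [key]; linarith⟩
end

section
/- Suppose w : ℝⁿ∖{0} → ℝ is a C² solution of aᵢⱼ(x) Dᵢⱼw = 0 on ℝⁿ∖{0}, where (aᵢⱼ(x)) is positive definite at each point, w extends continuously to 0 with w(0) = 0, and w(x) → 0 as |x| → ∞. Then w ≡ 0 on ℝⁿ∖{0}. -/
open Filter


lemma sd_nonpos {g φ : ℝ → ℝ} {T : ℝ} (hg : ∀ᶠ t in nhds (0:ℝ), HasDerivAt g (φ t) t)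
    (hφ0 : φ 0 = 0) (hφ : HasDerivAt φ T 0) (hmax : IsLocalMax g 0) : T ≤ 0 := by
  by_contra hT
  push_neg at hT
  -- slope of φ at 0 tends to T > 0, so φ t > 0 for small t > 0
  have hslope := hasDerivAt_iff_tendsto_slope.1 hφ
  have hpos : ∀ᶠ t in nhdsWithin (0:ℝ) (Set.Ioi 0), 0 < φ t := by
    have h1 : ∀ᶠ t in nhdsWithin (0:ℝ) {(0:ℝ)}ᶜ, 0 < slope φ 0 t :=
      hslope.eventually (eventually_gt_nhds hT)
    have h2 : ∀ᶠ t in nhdsWithin (0:ℝ) (Set.Ioi 0), 0 < slope φ 0 t :=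
      nhdsWithin_mono 0 (fun t (ht : t ∈ Set.Ioi 0) => ne_of_gt ht) h1
    filter_upwards [h2, self_mem_nhdsWithin] with t ht ht0
    have hs : slope φ 0 t = t⁻¹ * φ t := by simp [slope, hφ0]
    rw [hs] at ht
    have ht0' : (0:ℝ) < t := ht0
    have := mul_pos ht0' ht
    rw [mul_inv_cancel_left₀ (ne_of_gt ht0')] at this
    exact this
  -- extract intervals
  obtain ⟨e1, he1, hIoo⟩ := (nhdsGT_basis_of_exists_gt (⟨1, by norm_num⟩ : ∃ b, (0:ℝ) < b)).eventually_iff.1 hpos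
  obtain ⟨e2, he2, hball⟩ := Metric.eventually_nhds_iff.1 (hg.and hmax)
  set a := min e1 e2 / 2 with ha
  have ha0 : 0 < a := by positivity
  have hae1 : a < e1 := by
    have := min_le_left e1 e2; simp only [ha]; linarith
  have hae2 : a < e2 := by
    have := min_le_right e1 e2; simp only [ha]; linarith
  have hmem : ∀ t ∈ Set.Icc (0:ℝ) a, HasDerivAt g (φ t) t ∧ g t ≤ g 0 := by
    intro t ht
    apply hball
    rw [Real.dist_eq, sub_zero, abs_of_nonneg ht.1]
    exact lt_of_le_of_lt ht.2 hae2
  have hcont : ContinuousOn g (Set.Icc 0 a) := fun t ht =>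
    ((hmem t ht).1.continuousAt).continuousWithinAt
  have hderiv : ∀ t ∈ interior (Set.Icc (0:ℝ) a), 0 < deriv g t := by
    intro t ht
    rw [interior_Icc] at ht
    rw [(hmem t ⟨ht.1.le, ht.2.le⟩).1.deriv]
    exact hIoo ⟨ht.1, lt_trans ht.2 hae1⟩
  have hmono := strictMonoOn_of_deriv_pos (convex_Icc 0 a) hcont hderiv
  have := hmono (Set.left_mem_Icc.2 ha0.le) (Set.right_mem_Icc.2 ha0.le) ha0
  have hle := (hmem a (Set.right_mem_Icc.2 ha0.le)).2
  linarith



lemma quad_nonpos {n : ℕ} {v : (Fin n → ℝ) → ℝ} {p : Fin n → ℝ}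
    (hv : ∀ᶠ y in nhds p, ContDiffAt ℝ 2 v y) (hmax : IsLocalMax v p) (u : Fin n → ℝ) :
    fderiv ℝ (fun y => fderiv ℝ v y u) p u ≤ 0 := by
  set F : (Fin n → ℝ) → ℝ := fun y => fderiv ℝ v y u with hF
  set ℓ : ℝ → (Fin n → ℝ) := fun t => p + t • u with hℓ
  have hℓ0 : ℓ 0 = p := by simp [hℓ]
  have hℓd : ∀ t : ℝ, HasDerivAt ℓ u t := fun t =>
    by simpa [hℓ] using ((hasDerivAt_id t).smul_const u).const_add p
  have hℓc : Continuous ℓ := by continuity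
  have hℓt : Tendsto ℓ (nhds 0) (nhds p) := by
    rw [← hℓ0]; exact hℓc.tendsto 0
  -- F is differentiable at p
  have hvp : ContDiffAt ℝ 2 v p := hv.self_of_nhds
  have hdF : DifferentiableAt ℝ F p := by
    have h1 : DifferentiableAt ℝ (fderiv ℝ v) p := by
      have := (hvp.fderiv_right (m := 1) le_rfl)
      exact this.differentiableAt one_ne_zero
    exact (((ContinuousLinearMap.apply ℝ ℝ u).differentiableAt).comp p h1 : _)
  -- g and φ
  have hg : ∀ᶠ t in nhds (0:ℝ), HasDerivAt (v ∘ ℓ) (F (ℓ t)) t := by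
    filter_upwards [hℓt.eventually hv] with t ht
    exact (ht.differentiableAt (by norm_num)).hasFDerivAt.comp_hasDerivAt t (hℓd t)
  have hφ : HasDerivAt (F ∘ ℓ) (fderiv ℝ F p u) 0 := by
    have h := (hℓ0 ▸ hdF.hasFDerivAt : HasFDerivAt F (fderiv ℝ F p) (ℓ 0)).comp_hasDerivAt 0 (hℓd 0)
    simpa using h
  have hφ0 : (F ∘ ℓ) 0 = 0 := by
    simp [hℓ0, hF, hmax.fderiv_eq_zero]
  have hgmax : IsLocalMax (v ∘ ℓ) 0 := by
    have : ∀ᶠ t in nhds (0:ℝ), v (ℓ t) ≤ v p := hℓt.eventually hmax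
    simpa [IsLocalMax, IsMaxFilter, hℓ0] using this
  exact sd_nonpos hg hφ0 hφ hgmax


lemma quad_eq {n : ℕ} {v : (Fin n → ℝ) → ℝ} {p : Fin n → ℝ} (hvp : ContDiffAt ℝ 2 v p)
    (u : Fin n → ℝ) :
    fderiv ℝ (fun y => fderiv ℝ v y u) p u
      = ∑ i, ∑ j, u i * u j
          * fderiv ℝ (fun y => fderiv ℝ v y (Pi.single i 1)) p (Pi.single j 1) := by
  set F : Fin n → (Fin n → ℝ) → ℝ := fun i y => fderiv ℝ v y (Pi.single i 1) with hF
  have husum : (u : Fin n → ℝ) = ∑ i, (u i) • (Pi.single i (1:ℝ) : Fin n → ℝ) := by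
    conv_lhs => rw [← Finset.univ_sum_single u]
    refine Finset.sum_congr rfl (fun i _ => ?_)
    rw [← Pi.single_smul, smul_eq_mul, mul_one]
  have happly : ∀ (L : (Fin n → ℝ) →L[ℝ] ℝ), L u = ∑ i, u i * L (Pi.single i 1) := by
    intro L
    conv_lhs => rw [husum]
    rw [map_sum]
    exact Finset.sum_congr rfl (fun i _ => by rw [map_smul, smul_eq_mul])
  have hstep1 : (fun y => fderiv ℝ v y u) = fun y => ∑ i, u i * F i y := by
    funext y
    exact happly _
  have hFd : ∀ i, DifferentiableAt ℝ (F i) p := by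
    intro i
    have h1 : DifferentiableAt ℝ (fderiv ℝ v) p :=
      (hvp.fderiv_right (m := 1) le_rfl).differentiableAt one_ne_zero
    exact ((ContinuousLinearMap.apply ℝ ℝ (Pi.single i 1)).differentiableAt).comp p h1
  rw [hstep1]
  rw [fderiv_fun_sum (fun i _ => (hFd i).const_mul (u i))]
  rw [ContinuousLinearMap.sum_apply]
  refine Finset.sum_congr rfl (fun i _ => ?_)
  rw [fderiv_const_mul (hFd i), ContinuousLinearMap.smul_apply, smul_eq_mul,
    happly (fderiv ℝ (F i) p), Finset.mul_sum]
  exact Finset.sum_congr rfl (fun j _ => by ring)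

open scoped MatrixOrder in
lemma trace_nonpos {n : ℕ} {A : Matrix (Fin n) (Fin n) ℝ} (hA : A.PosDef)
    {H : Matrix (Fin n) (Fin n) ℝ}
    (hq : ∀ u : Fin n → ℝ, ∑ i, ∑ j, u i * u j * H i j ≤ 0) :
    ∑ i, ∑ j, A i j * H i j ≤ 0 := by
  set S := CFC.sqrt A with hSdef
  have hS : S * S = A := CFC.sqrt_mul_sqrt_self A hA.posSemidef.nonneg
  have hherm := (Matrix.nonneg_iff_posSemidef.1 (CFC.sqrt_nonneg A)).1
  have hsym : ∀ i j, S i j = S j i := by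
    intro i j
    have h := congrFun (congrFun hherm j) i
    rw [← hSdef] at h
    simpa [Matrix.conjTranspose_apply] using h
  have hentry : ∀ i j, A i j * H i j = ∑ k, S k i * S k j * H i j := by
    intro i j
    rw [← hS, Matrix.mul_apply, Finset.sum_mul]
    exact Finset.sum_congr rfl (fun k _ => by rw [hsym i k])
  simp_rw [hentry]
  have h1 : ∀ i : Fin n, ∑ j, ∑ k, S k i * S k j * H i j
      = ∑ k, ∑ j, S k i * S k j * H i j := fun i => Finset.sum_comm
  simp_rw [h1]
  rw [Finset.sum_comm]
  exact Finset.sum_nonpos (fun k _ => hq (fun i => S k i))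





lemma key {n : ℕ} (hn : 0 < n)
    (w : (Fin n → ℝ) → ℝ) (A : (Fin n → ℝ) → Matrix (Fin n) (Fin n) ℝ)
    (hw : ContDiffOn ℝ 2 w {(0 : Fin n → ℝ)}ᶜ)
    (hA : ∀ x, x ≠ 0 → (A x).PosDef)
    (heq : ∀ x, x ≠ 0 →
      ∑ i, ∑ j, A x i j
        * fderiv ℝ (fun y => fderiv ℝ w y (Pi.single i 1)) x (Pi.single j 1) = 0)
    (hcont : ContinuousAt w 0) (hw0 : w 0 = 0)
    (hlim : Tendsto w (cocompact (Fin n → ℝ)) (nhds 0)) :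
    ∀ x, x ≠ 0 → w x ≤ 0 := by
  intro x₀ hx₀
  by_contra hc
  push_neg at hc
  set c := w x₀ with hcdef
  set i0 : Fin n := ⟨0, hn⟩ with hi0
  -- small ball around 0
  obtain ⟨δ₀, hδ₀, hδ₀p⟩ := Metric.continuousAt_iff.1 hcont (c/2) (by positivity)
  set δ := min δ₀ ‖x₀‖ / 2 with hδdef
  have hx₀n : 0 < ‖x₀‖ := norm_pos_iff.2 hx₀
  have hδpos : 0 < δ := by positivity
  have hδx₀ : δ < ‖x₀‖ := by
    have := min_le_right δ₀ ‖x₀‖; rw [hδdef]; linarith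
  have hδδ₀ : δ < δ₀ := by
    have := min_le_left δ₀ ‖x₀‖; rw [hδdef]; linarith
  have hsmall : ∀ x : Fin n → ℝ, dist x 0 ≤ δ → |w x| < c/2 := by
    intro x hx
    have := hδ₀p (show dist x 0 < δ₀ by linarith)
    rwa [hw0, dist_zero_right, Real.norm_eq_abs] at this
  -- large ball
  have hmem : w ⁻¹' Metric.ball 0 (c/2) ∈ cocompact (Fin n → ℝ) :=
    hlim (Metric.ball_mem_nhds 0 (by positivity))
  obtain ⟨K₀, hK₀c, hK₀⟩ := mem_cocompact.1 hmem
  obtain ⟨R₀, hR₀⟩ := hK₀c.isBounded.subset_closedBall 0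
  set R := max R₀ ‖x₀‖ + 1 with hRdef
  have hRx₀ : ‖x₀‖ < R := by
    have := le_max_right R₀ ‖x₀‖; rw [hRdef]; linarith
  have hRδ : δ < R := lt_trans hδx₀ hRx₀
  have hRbig : ∀ x : Fin n → ℝ, R ≤ dist x 0 → |w x| < c/2 := by
    intro x hx
    have hxK : x ∉ K₀ := by
      intro hxK
      have := hR₀ hxK
      rw [Metric.mem_closedBall] at this
      have := le_max_left R₀ ‖x₀‖
      rw [hRdef] at hx; linarith
    have := hK₀ hxK
    rw [Set.mem_preimage, Metric.mem_ball, dist_zero_right, Real.norm_eq_abs] at this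
    exact this
  -- perturbation
  set ε := c/4 * Real.exp (-R) with hεdef
  have hεpos : 0 < ε := by positivity
  set E : (Fin n → ℝ) → ℝ := fun x => Real.exp (x i0) with hE
  have hεE : ∀ x : Fin n → ℝ, dist x 0 ≤ R → ε * E x ≤ c/4 := by
    intro x hx
    have h1 : x i0 ≤ R := by
      have h2 : |x i0| ≤ ‖x‖ := by
        rw [← Real.norm_eq_abs]; exact norm_le_pi_norm x i0
      rw [dist_zero_right] at hx
      calc x i0 ≤ |x i0| := le_abs_self _
        _ ≤ ‖x‖ := h2
        _ ≤ R := hx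
    rw [hεdef, hE]
    calc c/4 * Real.exp (-R) * Real.exp (x i0) = c/4 * Real.exp (x i0 - R) := by
          rw [mul_assoc, ← Real.exp_add]; ring_nf
      _ ≤ c/4 * 1 := by
          have : Real.exp (x i0 - R) ≤ 1 := Real.exp_le_one_iff.2 (by linarith)
          nlinarith
      _ = c/4 := mul_one _
  set v : (Fin n → ℝ) → ℝ := fun x => w x + ε * E x with hv
  -- compact annulus
  set K := Metric.closedBall (0 : Fin n → ℝ) R \ Metric.ball 0 δ with hK
  have hKcomp : IsCompact K := (isCompact_closedBall 0 R).diff Metric.isOpen_ball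
  have hx₀K : x₀ ∈ K := by
    constructor
    · rw [Metric.mem_closedBall, dist_zero_right]; linarith
    · rw [Metric.mem_ball, dist_zero_right]; push_neg; linarith
  have hK0 : ∀ x ∈ K, x ≠ (0 : Fin n → ℝ) := by
    intro x hx h0
    have := hx.2
    rw [Metric.mem_ball, h0, dist_self] at this
    exact this hδpos
  have hEc : Continuous E := Real.continuous_exp.comp (continuous_apply i0)
  have hvcont : ContinuousOn v K := by
    apply ContinuousOn.add
    · exact (hw.continuousOn).mono (fun x hx => hK0 x hx)
    · exact (continuous_const.mul hEc).continuousOn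
  obtain ⟨p, hpK, hpmax⟩ := hKcomp.exists_isMaxOn ⟨x₀, hx₀K⟩ hvcont
  have hvx₀p : v x₀ ≤ v p := hpmax hx₀K
  have hvx₀ : c < v x₀ := by
    rw [hv]
    simp only [hE]
    nlinarith [Real.exp_pos (x₀ i0), hεpos]
  -- boundary exclusion
  have hbnd : ¬ (|w p| < c/2) := by
    intro habs
    have h1 : ε * E p ≤ c/4 := hεE p hpK.1
    have h2 : v p ≤ 3*c/4 := by
      rw [hv]; simp only []
      have := abs_lt.1 habs
      linarith
    have hfin : c < 3*c/4 := lt_of_lt_of_le (lt_of_lt_of_le hvx₀ hvx₀p) h2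
    linarith
  have hd1 : δ < dist p 0 := by
    rcases lt_or_eq_of_le (not_lt.1 (fun h => hpK.2 (Metric.mem_ball.2 h))) with h | h
    · exact h
    · exact absurd (hsmall p h.ge) hbnd
  have hd2 : dist p 0 < R := by
    rcases lt_or_eq_of_le (Metric.mem_closedBall.1 hpK.1) with h | h
    · exact h
    · exact absurd (hRbig p h.ge) hbnd
  have hp0 : p ≠ 0 := by
    intro h
    rw [h, dist_self] at hd1
    linarith
  -- p is an interior local max
  have hploc : IsLocalMax v p := by
    have hU : IsOpen (Metric.ball (0 : Fin n → ℝ) R \ Metric.closedBall 0 δ) :=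
      Metric.isOpen_ball.sdiff Metric.isClosed_closedBall
    have hpU : p ∈ Metric.ball (0 : Fin n → ℝ) R \ Metric.closedBall 0 δ :=
      ⟨Metric.mem_ball.2 hd2, fun h => absurd (Metric.mem_closedBall.1 h) (not_le.2 hd1)⟩
    have hUK : Metric.ball (0 : Fin n → ℝ) R \ Metric.closedBall 0 δ ⊆ K := by
      intro x hx
      exact ⟨Metric.ball_subset_closedBall hx.1,
        fun h => hx.2 (Metric.ball_subset_closedBall h)⟩
    filter_upwards [mem_of_superset (hU.mem_nhds hpU) hUK] with y hy
    exact hpmax hy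
  -- smoothness of perturbation
  have hEsm : ContDiff ℝ 2 E :=
    Real.contDiff_exp.comp (ContinuousLinearMap.proj i0 :
      (Fin n → ℝ) →L[ℝ] ℝ).contDiff
  have hnb : {(0 : Fin n → ℝ)}ᶜ ∈ nhds p := isOpen_compl_singleton.mem_nhds hp0
  have hvC : ∀ᶠ y in nhds p, ContDiffAt ℝ 2 v y := by
    filter_upwards [hnb] with y hy
    exact (hw.contDiffAt (isOpen_compl_singleton.mem_nhds hy)).add
      (contDiffAt_const.mul hEsm.contDiffAt)
  have hEd : ∀ y : Fin n → ℝ,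
      HasFDerivAt E (Real.exp (y i0) • (ContinuousLinearMap.proj i0 :
        (Fin n → ℝ) →L[ℝ] ℝ)) y := fun y => by
    have := (Real.hasDerivAt_exp (y i0)).comp_hasFDerivAt y
      (ContinuousLinearMap.proj i0 : (Fin n → ℝ) →L[ℝ] ℝ).hasFDerivAt
    exact this
  -- first derivatives of v in terms of w
  have hFv : ∀ i : Fin n, (fun y => fderiv ℝ v y (Pi.single i 1))
      =ᶠ[nhds p] (fun y => fderiv ℝ w y (Pi.single i 1)
        + (ε * (Pi.single i (1:ℝ) : Fin n → ℝ) i0) * E y) := by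
    intro i
    filter_upwards [hnb] with y hy
    have hwd : DifferentiableAt ℝ w y :=
      ((hw.contDiffAt (isOpen_compl_singleton.mem_nhds hy)).differentiableAt
        (by norm_num))
    have hE1 : DifferentiableAt ℝ E y := (hEd y).differentiableAt
    have hEε : DifferentiableAt ℝ (fun x => ε * E x) y := hE1.const_mul ε
    have hfv : fderiv ℝ v y = fderiv ℝ w y + ε • fderiv ℝ E y := by
      rw [hv]
      rw [fderiv_fun_add hwd hEε, fderiv_const_mul hE1]
    rw [hfv, ContinuousLinearMap.add_apply, ContinuousLinearMap.smul_apply,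
      (hEd y).fderiv, ContinuousLinearMap.smul_apply,
      ContinuousLinearMap.proj_apply, smul_eq_mul, smul_eq_mul, hE]
    ring
  -- second derivatives of v
  have hwp : ContDiffAt ℝ 2 w p := hw.contDiffAt hnb
  have hFwd : ∀ i : Fin n, DifferentiableAt ℝ
      (fun y => fderiv ℝ w y (Pi.single i 1)) p := by
    intro i
    have h1 : DifferentiableAt ℝ (fderiv ℝ w) p :=
      (hwp.fderiv_right (m := 1) le_rfl).differentiableAt one_ne_zero
    exact ((ContinuousLinearMap.apply ℝ ℝ
      ((Pi.single i 1 : Fin n → ℝ))).differentiableAt).comp p h1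
  have hHv : ∀ i j : Fin n,
      fderiv ℝ (fun y => fderiv ℝ v y (Pi.single i 1)) p (Pi.single j 1)
        = fderiv ℝ (fun y => fderiv ℝ w y (Pi.single i 1)) p (Pi.single j 1)
          + ε * (Pi.single i (1:ℝ) : Fin n → ℝ) i0
            * (Real.exp (p i0) * (Pi.single j (1:ℝ) : Fin n → ℝ) i0) := by
    intro i j
    rw [(hFv i).fderiv_eq]
    have hE1 : DifferentiableAt ℝ E p := (hEd p).differentiableAt
    rw [fderiv_fun_add (hFwd i) (hE1.const_mul _), ContinuousLinearMap.add_apply,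
      fderiv_const_mul hE1, ContinuousLinearMap.smul_apply, (hEd p).fderiv,
      ContinuousLinearMap.smul_apply, ContinuousLinearMap.proj_apply,
      smul_eq_mul, smul_eq_mul]
  -- the quadratic form of v at p is nonpositive against A
  have htr : ∑ i, ∑ j, A p i j
      * fderiv ℝ (fun y => fderiv ℝ v y (Pi.single i 1)) p (Pi.single j 1) ≤ 0 := by
    refine trace_nonpos (hA p hp0)
      (H := fun i j => fderiv ℝ (fun y => fderiv ℝ v y (Pi.single i 1)) p
        (Pi.single j 1)) ?_
    intro u
    rw [← quad_eq hvC.self_of_nhds u]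
    exact quad_nonpos hvC hploc u
  -- but it is positive
  have hA00 : 0 < A p i0 i0 := by
    exact (hA p hp0).diag_pos
  have hsum : ∑ i, ∑ j, A p i j
      * fderiv ℝ (fun y => fderiv ℝ v y (Pi.single i 1)) p (Pi.single j 1)
        = ε * Real.exp (p i0) * A p i0 i0 := by
    simp_rw [hHv, mul_add, Finset.sum_add_distrib, heq p hp0, zero_add]
    simp [Pi.single_apply, mul_ite, ite_mul, Finset.sum_ite_eq, Finset.mem_univ]
    ring
  rw [hsum] at htr
  exact absurd htr (not_le.2 (mul_pos (mul_pos hεpos (Real.exp_pos (p i0))) hA00))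


theorem maximum_principle_punctured {n : ℕ} (hn : 0 < n)
    (w : (Fin n → ℝ) → ℝ) (A : (Fin n → ℝ) → Matrix (Fin n) (Fin n) ℝ)
    (hw : ContDiffOn ℝ 2 w {(0 : Fin n → ℝ)}ᶜ)
    (hA : ∀ x, x ≠ 0 → (A x).PosDef)
    (heq : ∀ x, x ≠ 0 →
      ∑ i, ∑ j, A x i j
        * fderiv ℝ (fun y => fderiv ℝ w y (Pi.single i 1)) x (Pi.single j 1) = 0)
    (hcont : ContinuousAt w 0) (hw0 : w 0 = 0)
    (hlim : Tendsto w (cocompact (Fin n → ℝ)) (nhds 0)) :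
    ∀ x, x ≠ 0 → w x = 0 := by
  intro x hx
  have h1 := key hn w A hw hA heq hcont hw0 hlim x hx
  have heq' : ∀ x : Fin n → ℝ, x ≠ 0 →
      ∑ i, ∑ j, A x i j
        * fderiv ℝ (fun y => fderiv ℝ (fun z => -w z) y (Pi.single i 1)) x
          (Pi.single j 1) = 0 := by
    intro x hx0
    have hin : ∀ i : Fin n, (fun y => fderiv ℝ (fun z => -w z) y
        ((Pi.single i 1 : Fin n → ℝ)))
        = fun y => -(fderiv ℝ w y (Pi.single i 1)) := by
      intro i
      funext y
      rw [fderiv_fun_neg]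
      simp
    have hterm : ∀ i j : Fin n,
        fderiv ℝ (fun y => fderiv ℝ (fun z => -w z) y (Pi.single i 1)) x
          ((Pi.single j 1 : Fin n → ℝ))
        = -(fderiv ℝ (fun y => fderiv ℝ w y (Pi.single i 1)) x (Pi.single j 1)) := by
      intro i j
      rw [hin i]
      rw [fderiv_fun_neg]
      simp
    simp_rw [hterm, mul_neg, Finset.sum_neg_distrib]
    rw [heq x hx0, neg_zero]
  have h2 := key hn (fun y => -w y) A hw.neg hA heq' hcont.neg (by simp [hw0])
    (by simpa using hlim.neg) x hx
  simp only [neg_nonpos] at h2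
  linarith
end

section
/- Let u(x) = U(s), s = (1/2)Σᵢaᵢxᵢ², with aᵢ > 0 and U ∈ C² satisfying U′ ≥ 1 and U′ + 2sU″ > 0 for s > 0. Then D²u(x) is positive definite for every x ≠ 0; more precisely σₖ(λ(D²u)) ≥ (U′)ᵏσₖ(a) + 2sU″(U′)^{k−1}σₖ(a) > 0 for every k = 1,…,n. -/
/-- The `k`-th elementary symmetric polynomial of `a` over the index set `s`. -/
def esym {n : ℕ} (s : Finset (Fin n)) (k : ℕ) (a : Fin n → ℝ) : ℝ :=
  ∑ t ∈ Finset.powersetCard k s, ∏ i ∈ t, a i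

lemma esym_pos {n : ℕ} (a : Fin n → ℝ) (ha : ∀ i, 0 < a i) (k : ℕ) (hk : k ≤ n) :
    0 < esym Finset.univ k a := by
  unfold esym
  apply Finset.sum_pos
  · intro t ht
    exact Finset.prod_pos fun i _ => ha i
  · rw [Finset.powersetCard_nonempty]
    simpa using hk

lemma esym_erase_le {n : ℕ} (a : Fin n → ℝ) (ha : ∀ i, 0 < a i) (i : Fin n) (k : ℕ) :
    a i * esym (Finset.univ.erase i) k a ≤ esym Finset.univ (k + 1) a := by
  unfold esym
  rw [Finset.mul_sum]
  have hnotmem : ∀ t ∈ Finset.powersetCard k (Finset.univ.erase i), i ∉ t := by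
    intro t ht
    rw [Finset.mem_powersetCard] at ht
    exact fun hit => (Finset.mem_erase.mp (ht.1 hit)).1 rfl
  have hinj : Set.InjOn (insert i)
      ((Finset.powersetCard k (Finset.univ.erase i)) : Set (Finset (Fin n))) := by
    intro t ht u hu h
    have hti : i ∉ t := hnotmem t ht
    have hui : i ∉ u := hnotmem u hu
    have := congrArg (fun w => Finset.erase w i) h
    simpa [Finset.erase_insert hti, Finset.erase_insert hui] using this
  calc ∑ t ∈ Finset.powersetCard k (Finset.univ.erase i), a i * ∏ j ∈ t, a j
      = ∑ t ∈ (Finset.powersetCard k (Finset.univ.erase i)).image (insert i),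
          ∏ j ∈ t, a j := by
        rw [Finset.sum_image hinj]
        refine Finset.sum_congr rfl fun t ht => ?_
        rw [Finset.prod_insert (hnotmem t ht)]
    _ ≤ ∑ t ∈ Finset.powersetCard (k + 1) Finset.univ, ∏ j ∈ t, a j := by
        apply Finset.sum_le_sum_of_subset_of_nonneg
        · intro t ht
          rw [Finset.mem_image] at ht
          obtain ⟨u, hu, rfl⟩ := ht
          have hu' := (Finset.mem_powersetCard.mp hu)
          rw [Finset.mem_powersetCard]
          refine ⟨Finset.subset_univ _, ?_⟩
          rw [Finset.card_insert_of_notMem (hnotmem u hu), hu'.2]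
        · intro t _ _
          exact le_of_lt (Finset.prod_pos fun j _ => ha j)

lemma pow_pos_of_ne_zero_aux (y : ℝ) (hy : y ≠ 0) : 0 < y ^ 2 :=
  pow_two_pos_of_ne_zero hy

theorem hessian_posdef_generalized_symmetric {n : ℕ} (hn : 0 < n)
    (a : Fin n → ℝ) (ha : ∀ i, 0 < a i) (U : ℝ → ℝ) (hU : ContDiff ℝ 2 U)
    (hU1 : ∀ s, 0 < s → 1 ≤ deriv U s)
    (hU2 : ∀ s, 0 < s → deriv (deriv U) s ≤ 0)
    (hU3 : ∀ s, 0 < s → 0 < deriv U s + 2 * s * deriv (deriv U) s)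
    (x : Fin n → ℝ) (hx : x ≠ 0)
    (s : ℝ) (hs : s = (1 / 2) * ∑ i, a i * x i ^ 2) :
    (Matrix.of fun i j => deriv U s * a i * (if i = j then (1 : ℝ) else 0)
        + deriv (deriv U) s * a i * a j * x i * x j).PosDef
    ∧ ∀ k, 1 ≤ k → k ≤ n →
        (deriv U s) ^ k * esym Finset.univ k a
            + deriv (deriv U) s * (deriv U s) ^ (k - 1)
              * ∑ i, (a i * x i) ^ 2 * esym (Finset.univ.erase i) (k - 1) a
          ≥ (deriv U s) ^ k * esym Finset.univ k a
            + 2 * s * deriv (deriv U) s * (deriv U s) ^ (k - 1) * esym Finset.univ k a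
        ∧ 0 < (deriv U s) ^ k * esym Finset.univ k a
            + 2 * s * deriv (deriv U) s * (deriv U s) ^ (k - 1) * esym Finset.univ k a := by
  -- basic positivity facts
  obtain ⟨i₀, hi₀⟩ : ∃ i, x i ≠ 0 := by
    by_contra h
    push_neg at h
    exact hx (funext h)
  have hs0 : 0 < s := by
    rw [hs]
    have : 0 < ∑ i, a i * x i ^ 2 := by
      apply Finset.sum_pos' (fun i _ => mul_nonneg (ha i).le (sq_nonneg _))
      exact ⟨i₀, Finset.mem_univ i₀, mul_pos (ha i₀) (pow_pos_of_ne_zero_aux (x i₀) hi₀)⟩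
    linarith
  set p := deriv U s with hp
  set q := deriv (deriv U) s with hq
  have hp1 : 1 ≤ p := hU1 s hs0
  have hp0 : 0 < p := lt_of_lt_of_le one_pos hp1
  have hq0 : q ≤ 0 := hU2 s hs0
  have hpq : 0 < p + 2 * s * q := hU3 s hs0
  have h2s : 2 * s = ∑ i, a i * x i ^ 2 := by rw [hs]; ring
  constructor
  · apply Matrix.PosDef.of_dotProduct_mulVec_pos
    · -- Hermitian
      ext i j
      simp only [Matrix.conjTranspose_apply, Matrix.of_apply, star_trivial]
      by_cases h : i = j
      · subst h; ring
      · rw [if_neg h, if_neg (Ne.symm h)]; ring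
    · intro v hv
      obtain ⟨j₀, hj₀⟩ : ∃ i, v i ≠ 0 := by
        by_contra h
        push_neg at h
        exact hv (funext h)
      set T := ∑ j, a j * x j * v j with hT
      set A := ∑ i, a i * v i ^ 2 with hA
      have key : dotProduct (star v) ((Matrix.of fun i j =>
            p * a i * (if i = j then (1 : ℝ) else 0)
          + q * a i * a j * x i * x j).mulVec v)
          = p * A + q * T ^ 2 := by
        simp only [dotProduct, Matrix.mulVec, Matrix.of_apply, star_trivial,
          Pi.star_apply]
        have h1 : ∀ i, (∑ j, ((p * a i * if i = j then (1:ℝ) else 0)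
            + q * a i * a j * x i * x j) * v j)
            = p * a i * v i + q * a i * x i * T := by
          intro i
          have h0 : ∀ j, ((p * a i * if i = j then (1:ℝ) else 0)
              + q * a i * a j * x i * x j) * v j
              = (if i = j then p * a i * v i else 0) + q * a i * x i * (a j * x j * v j) := by
            intro j
            by_cases h : i = j
            · rw [if_pos h, if_pos h]; subst h; ring
            · rw [if_neg h, if_neg h]; ring
          rw [Finset.sum_congr rfl fun j _ => h0 j, Finset.sum_add_distrib,
            ← Finset.mul_sum, ← hT, Finset.sum_ite_eq]
          simp
        simp only [h1]
        have h2 : ∀ i, v i * (p * a i * v i + q * a i * x i * T)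
            = p * (a i * v i ^ 2) + q * T * (a i * x i * v i) := fun i => by ring
        rw [Finset.sum_congr rfl fun i _ => h2 i, Finset.sum_add_distrib,
          ← Finset.mul_sum, ← Finset.mul_sum, ← hT, ← hA]
        ring
      rw [key]
      have hApos : 0 < A := by
        rw [hA]
        apply Finset.sum_pos' (fun i _ => mul_nonneg (ha i).le (sq_nonneg _))
        exact ⟨j₀, Finset.mem_univ j₀, mul_pos (ha j₀) (pow_pos_of_ne_zero_aux (v j₀) hj₀)⟩
      have hCS : T ^ 2 ≤ (∑ i, a i * x i ^ 2) * A := by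
        rw [hT, hA]
        have h := Finset.sum_mul_sq_le_sq_mul_sq Finset.univ
          (fun i => Real.sqrt (a i) * x i) (fun i => Real.sqrt (a i) * v i)
        have hsq : ∀ i, Real.sqrt (a i) * Real.sqrt (a i) = a i := fun i =>
          Real.mul_self_sqrt (le_of_lt (ha i))
        calc (∑ i, a i * x i * v i) ^ 2
            = (∑ i, (Real.sqrt (a i) * x i) * (Real.sqrt (a i) * v i)) ^ 2 := by
              congr 1
              exact Finset.sum_congr rfl fun i _ => by
                rw [show Real.sqrt (a i) * x i * (Real.sqrt (a i) * v i)
                  = (Real.sqrt (a i) * Real.sqrt (a i)) * x i * v i by ring, hsq i]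
          _ ≤ (∑ i, (Real.sqrt (a i) * x i) ^ 2) * ∑ i, (Real.sqrt (a i) * v i) ^ 2 := h
          _ = (∑ i, a i * x i ^ 2) * ∑ i, a i * v i ^ 2 := by
              congr 1 <;> exact Finset.sum_congr rfl fun i _ => by
                rw [mul_pow, sq (Real.sqrt (a i)), hsq i]
      rw [← h2s] at hCS
      nlinarith [mul_nonneg (neg_nonneg.mpr hq0) (sub_nonneg.mpr hCS), mul_pos hs0 hApos]
  · intro k hk1 hkn
    have hσk : 0 < esym Finset.univ k a := esym_pos a ha k hkn
    have hpow : 0 < p ^ (k - 1) := pow_pos hp0 _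
    constructor
    · -- first inequality
      have hsum : ∑ i, (a i * x i) ^ 2 * esym (Finset.univ.erase i) (k - 1) a
          ≤ 2 * s * esym Finset.univ k a := by
        rw [h2s, Finset.sum_mul]
        apply Finset.sum_le_sum
        intro i _
        have h1 : a i * esym (Finset.univ.erase i) (k - 1) a ≤ esym Finset.univ k a := by
          have := esym_erase_le a ha i (k - 1)
          rwa [Nat.sub_add_cancel hk1] at this
        have h2 : (a i * x i) ^ 2 * esym (Finset.univ.erase i) (k - 1) a
            = (a i * x i ^ 2) * (a i * esym (Finset.univ.erase i) (k - 1) a) := by ring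
        rw [h2]
        exact mul_le_mul_of_nonneg_left h1 (mul_nonneg (ha i).le (sq_nonneg _))
      have hqp : 0 ≤ -q * p ^ (k - 1) := mul_nonneg (neg_nonneg.mpr hq0) (le_of_lt hpow)
      nlinarith [mul_le_mul_of_nonneg_left hsum hqp]
    · -- positivity
      have : p ^ k * esym Finset.univ k a
          + 2 * s * q * p ^ (k - 1) * esym Finset.univ k a
          = (p + 2 * s * q) * p ^ (k - 1) * esym Finset.univ k a := by
        have : p ^ k = p * p ^ (k - 1) := by
          rw [← pow_succ']
          congr 1
          omega
        rw [this]; ring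
      rw [this]
      exact mul_pos (mul_pos hpq hpow) hσk
end

section
/- (Rigidity of generalized symmetric solutions, Monge–Ampère quotient form) Suppose 0 < a₁ ≤ ⋯ ≤ aₙ, b > 0, c₀ = ∏ᵢ aᵢ/(aᵢ+2b), 0 < s₁ < s₂, and U ∈ C²((s₁,s₂)) satisfies for every s ∈ (s₁,s₂) and every i₀ ∈ {1,…,n}: (U′)ⁿ + 2sU″(U′)^{n−1} − c₀∏ᵢ(U′+2b/aᵢ) = 2c₀ s U″ ∏_{i≠i₀}(U′+2b/aᵢ), with U′ > 0 on (s₁,s₂). Then either U″ ≡ 0 on (s₁,s₂), or a₁ = a₂ = ⋯ = aₙ. -/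
open Set

theorem rigidity_generalized_symmetric_MA_quotient {n : ℕ} (hn : 0 < n)
    (a : Fin n → ℝ) (ha : ∀ i, 0 < a i) (hmono : Monotone a)
    (b c0 : ℝ) (hb : 0 < b) (hc0 : c0 = ∏ i, a i / (a i + 2 * b))
    (s₁ s₂ : ℝ) (hs₁ : 0 < s₁) (hs : s₁ < s₂)
    (U : ℝ → ℝ) (hU : ContDiffOn ℝ 2 U (Ioo s₁ s₂))
    (hU' : ∀ s ∈ Ioo s₁ s₂, 0 < deriv U s)
    (heq : ∀ s ∈ Ioo s₁ s₂, ∀ i₀ : Fin n,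
      (deriv U s) ^ n + 2 * s * deriv (deriv U) s * (deriv U s) ^ (n - 1)
          - c0 * ∏ i, (deriv U s + 2 * b / a i)
        = 2 * c0 * s * deriv (deriv U) s
          * ∏ i ∈ Finset.univ.erase i₀, (deriv U s + 2 * b / a i)) :
    (∀ s ∈ Ioo s₁ s₂, deriv (deriv U) s = 0) ∨ (∀ i j, a i = a j) := by
  by_cases h : ∀ s ∈ Ioo s₁ s₂, deriv (deriv U) s = 0
  · exact Or.inl h
  · right
    push_neg at h
    obtain ⟨s, hsmem, hne⟩ := h
    have hc0pos : 0 < c0 := by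
      rw [hc0]
      exact Finset.prod_pos fun i _ => div_pos (ha i) (by have := ha i; linarith)
    have hspos : 0 < s := lt_trans hs₁ hsmem.1
    have hfac : ∀ i, 0 < deriv U s + 2 * b / a i := fun i =>
      add_pos (hU' s hsmem) (div_pos (by linarith) (ha i))
    intro i j
    have h1 := heq s hsmem i
    have h2 := heq s hsmem j
    have hcoef : (2 : ℝ) * c0 * s * deriv (deriv U) s ≠ 0 := by
      apply mul_ne_zero (mul_ne_zero (mul_ne_zero (by norm_num) hc0pos.ne') hspos.ne') hne
    have hprod : (∏ k ∈ Finset.univ.erase i, (deriv U s + 2 * b / a k))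
        = ∏ k ∈ Finset.univ.erase j, (deriv U s + 2 * b / a k) :=
      mul_left_cancel₀ hcoef (h1.symm.trans h2)
    have hi := (Finset.mul_prod_erase Finset.univ
      (fun k => deriv U s + 2 * b / a k) (Finset.mem_univ i)).symm
    have hj := (Finset.mul_prod_erase Finset.univ
      (fun k => deriv U s + 2 * b / a k) (Finset.mem_univ j)).symm
    have hpos : (0:ℝ) < ∏ k ∈ Finset.univ.erase i, (deriv U s + 2 * b / a k) :=
      Finset.prod_pos fun k _ => hfac k
    have hPij : deriv U s + 2 * b / a i = deriv U s + 2 * b / a j := by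
      have : (deriv U s + 2 * b / a i) *
          (∏ k ∈ Finset.univ.erase i, (deriv U s + 2 * b / a k))
          = (deriv U s + 2 * b / a j) *
          (∏ k ∈ Finset.univ.erase i, (deriv U s + 2 * b / a k)) := by
        rw [← hi, hprod, ← hj]
      exact mul_right_cancel₀ hpos.ne' this
    have h' : 2 * b / a i = 2 * b / a j := by linarith
    have hai := (ha i).ne'
    have haj := (ha j).ne'
    field_simp at h'
    exact h'.symm
end

section
/- (Rigidity, inverse harmonic Hessian case) Suppose 0 < a₁ ≤ ⋯ ≤ aₙ, c₀ > 0, 0 < s₁ < s₂, and U ∈ C²((s₁,s₂)) with U′ > 0 satisfies for every s ∈ (s₁,s₂) and every i₀: c₀(U′)ⁿσₙ(a) + 2c₀ sU″(U′)^{n−1}σₙ(a) − (U′)^{n−1}σ_{n−1}(a) = 2sU″(U′)^{n−2} a_{i₀} σ_{n−2;i₀}(a). Then either U″ ≡ 0 on (s₁,s₂) (and U′ = σ_{n−1}(a)/(c₀σₙ(a))), or a₁ = ⋯ = aₙ. -/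
open Set

lemma esym_rec {n : ℕ} (s : Finset (Fin n)) (i : Fin n) (hi : i ∈ s) (k : ℕ) (a : Fin n → ℝ) :
    esym s (k + 1) a = esym (s.erase i) (k + 1) a + a i * esym (s.erase i) k a := by
  unfold esym
  rw [← Finset.insert_erase hi, Finset.powersetCard_succ_insert (Finset.notMem_erase i s),
    Finset.erase_insert (Finset.notMem_erase i s), Finset.sum_union, Finset.sum_image,
    Finset.mul_sum]
  · congr 1
    refine Finset.sum_congr rfl fun t ht => ?_
    rw [Finset.mem_powersetCard] at ht
    rw [Finset.prod_insert (fun h => (Finset.notMem_erase i s) (ht.1 h))]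
  · intro t ht u hu h
    rw [Finset.mem_coe, Finset.mem_powersetCard] at ht hu
    have hit : i ∉ t := fun h' => (Finset.notMem_erase i s) (ht.1 h')
    have hiu : i ∉ u := fun h' => (Finset.notMem_erase i s) (hu.1 h')
    have ht2 : t = (insert i t).erase i := by rw [Finset.erase_insert hit]
    rw [ht2, h, Finset.erase_insert hiu]
  · rw [Finset.disjoint_left]
    intro t ht ht'
    rw [Finset.mem_powersetCard] at ht
    obtain ⟨u, hu, rfl⟩ := Finset.mem_image.mp ht'
    exact (Finset.notMem_erase i s) (ht.1 (Finset.mem_insert_self i u))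

lemma esym_top {n : ℕ} (s : Finset (Fin n)) (a : Fin n → ℝ) :
    esym s s.card a = ∏ i ∈ s, a i := by
  unfold esym
  rw [Finset.powersetCard_self, Finset.sum_singleton]

theorem rigidity_generalized_symmetric_inverse_harmonic {n : ℕ} (hn : 2 ≤ n)
    (a : Fin n → ℝ) (ha : ∀ i, 0 < a i) (hmono : Monotone a)
    (c0 : ℝ) (hc0 : 0 < c0)
    (s₁ s₂ : ℝ) (hs₁ : 0 < s₁) (hs : s₁ < s₂)
    (U : ℝ → ℝ) (hU : ContDiffOn ℝ 2 U (Ioo s₁ s₂))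
    (hU' : ∀ s ∈ Ioo s₁ s₂, 0 < deriv U s)
    (heq : ∀ s ∈ Ioo s₁ s₂, ∀ i₀ : Fin n,
      c0 * (deriv U s) ^ n * esym Finset.univ n a
          + 2 * c0 * s * deriv (deriv U) s * (deriv U s) ^ (n - 1) * esym Finset.univ n a
          - (deriv U s) ^ (n - 1) * esym Finset.univ (n - 1) a
        = 2 * s * deriv (deriv U) s * (deriv U s) ^ (n - 2) * a i₀
            * esym (Finset.univ.erase i₀) (n - 2) a) :
    ((∀ s ∈ Ioo s₁ s₂, deriv (deriv U) s = 0)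
        ∧ ∀ s ∈ Ioo s₁ s₂,
            deriv U s = esym Finset.univ (n - 1) a / (c0 * esym Finset.univ n a))
      ∨ (∀ i j, a i = a j) := by
  have hne : (Nonempty (Fin n)) := ⟨⟨0, by omega⟩⟩
  have hcard : (Finset.univ : Finset (Fin n)).card = n := Finset.card_univ.trans (Fintype.card_fin n)
  have hesymn : esym Finset.univ n a = ∏ i, a i := by
    have := esym_top (Finset.univ : Finset (Fin n)) a
    rwa [hcard] at this
  have hσn : 0 < esym Finset.univ n a := by
    rw [hesymn]; exact Finset.prod_pos fun i _ => ha i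
  by_cases h2 : ∀ s ∈ Ioo s₁ s₂, deriv (deriv U) s = 0
  · left
    refine ⟨h2, fun s hsm => ?_⟩
    have := heq s hsm (Classical.arbitrary _)
    rw [h2 s hsm] at this
    simp only [mul_zero, zero_mul, add_zero] at this
    have hu := hU' s hsm
    have hupow : (deriv U s) ^ (n - 1) ≠ 0 := pow_ne_zero _ (ne_of_gt hu)
    have hpow : (deriv U s) ^ n = (deriv U s) ^ (n - 1) * deriv U s := by
      rw [← pow_succ]; congr 1; omega
    rw [hpow] at this
    have h0 : (c0 * esym Finset.univ n a * deriv U s - esym Finset.univ (n - 1) a)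
        * (deriv U s) ^ (n - 1) = 0 := by linear_combination this
    have key : c0 * esym Finset.univ n a * deriv U s = esym Finset.univ (n - 1) a := by
      rcases mul_eq_zero.mp h0 with h | h
      · linarith [sub_eq_zero.mp h]
      · exact absurd h hupow
    field_simp
    linarith [key]
  · right
    push_neg at h2
    obtain ⟨s, hsm, hd⟩ := h2
    have hu := hU' s hsm
    have hfac : 2 * s * deriv (deriv U) s * (deriv U s) ^ (n - 2) ≠ 0 := by
      have hs0 : 0 < s := lt_trans hs₁ hsm.1
      positivity
    -- constancy of a i * σ_{n-2;i}
    have hconst : ∀ i j : Fin n, a i * esym (Finset.univ.erase i) (n - 2) a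
        = a j * esym (Finset.univ.erase j) (n - 2) a := by
      intro i j
      have hi := heq s hsm i
      have hj := heq s hsm j
      have : 2 * s * deriv (deriv U) s * (deriv U s) ^ (n - 2)
            * (a i * esym (Finset.univ.erase i) (n - 2) a)
          = 2 * s * deriv (deriv U) s * (deriv U s) ^ (n - 2)
            * (a j * esym (Finset.univ.erase j) (n - 2) a) := by
        rw [← mul_assoc, ← mul_assoc, ← hi, ← hj]
      exact mul_left_cancel₀ hfac this
    intro i j
    -- σ_{n-1}(univ) = ∏_{k≠i} a + a i σ_{n-2;i}
    have hrec : ∀ i : Fin n, esym Finset.univ (n - 1) a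
        = (∏ k ∈ Finset.univ.erase i, a k) + a i * esym (Finset.univ.erase i) (n - 2) a := by
      intro i
      have hcarde : (Finset.univ.erase i).card = n - 1 := by
        rw [Finset.card_erase_of_mem (Finset.mem_univ i), hcard]
      have h1 : n - 1 = (n - 2) + 1 := by omega
      have h2 : (n - 2) + 1 = (Finset.univ.erase i).card := by rw [hcarde]; omega
      rw [h1, esym_rec Finset.univ i (Finset.mem_univ i) (n - 2) a]
      congr 1
      rw [h2, esym_top]
    have hprodeq : (∏ k ∈ Finset.univ.erase i, a k) = ∏ k ∈ Finset.univ.erase j, a k := by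
      have := hconst i j
      have hi := hrec i
      have hj := hrec j
      linarith
    have hP : ∀ i : Fin n, a i * ∏ k ∈ Finset.univ.erase i, a k = ∏ k, a k := by
      intro i
      exact Finset.mul_prod_erase Finset.univ a (Finset.mem_univ i)
    have hpos : 0 < ∏ k ∈ Finset.univ.erase i, a k :=
      Finset.prod_pos fun k _ => ha k
    have : a i * ∏ k ∈ Finset.univ.erase i, a k = a j * ∏ k ∈ Finset.univ.erase i, a k := by
      rw [hP i, ← hP j, hprodeq]
    exact mul_right_cancel₀ (ne_of_gt hpos) this
end

section
/- If aᵢσ_{n−2;i}(a) takes the same value for all i ∈ {1,…,n}, where a = (a₁,…,aₙ) with all aᵢ > 0 and n ≥ 2, then a₁ = a₂ = ⋯ = aₙ. -/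
lemma key_split {n : ℕ} (hn : 2 ≤ n) (a : Fin n → ℝ) (i : Fin n) :
    esym Finset.univ (n-1) a
      = ∏ j ∈ Finset.univ.erase i, a j + a i * esym (Finset.univ.erase i) (n-2) a := by
  classical
  have hcard : (Finset.univ.erase i).card = n - 1 := by
    simp [Finset.card_erase_of_mem]
  have hins : (Finset.univ : Finset (Fin n)) = insert i (Finset.univ.erase i) := by
    simp [Finset.insert_erase]
  have hsucc : n - 1 = (n - 2) + 1 := by omega
  unfold esym
  conv_lhs => rw [hins, hsucc]
  rw [Finset.powersetCard_succ_insert (Finset.notMem_erase i _)]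
  rw [Finset.sum_union]
  · congr 1
    · rw [Nat.succ_eq_add_one, ← hsucc, ← hcard, Finset.powersetCard_self, Finset.sum_singleton]
    · rw [Finset.sum_image, Finset.mul_sum]
      · refine Finset.sum_congr rfl fun t ht => ?_
        rw [Finset.mem_powersetCard] at ht
        have hi : i ∉ t := fun hmem => Finset.notMem_erase i _ (ht.1 hmem)
        rw [Finset.prod_insert hi]
      · intro x hx y hy hxy
        rw [Finset.mem_coe, Finset.mem_powersetCard] at hx hy
        have hxi : i ∉ x := fun hmem => Finset.notMem_erase i _ (hx.1 hmem)
        have hyi : i ∉ y := fun hmem => Finset.notMem_erase i _ (hy.1 hmem)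
        have := congrArg (Finset.erase · i) hxy
        simpa [Finset.erase_insert, hxi, hyi] using this
  · rw [Finset.disjoint_left]
    intro t ht ht'
    rw [Finset.mem_powersetCard] at ht
    have : i ∉ t := fun hmem => Finset.notMem_erase i _ (ht.1 hmem)
    rw [Finset.mem_image] at ht'
    obtain ⟨u, _, rfl⟩ := ht'
    exact this (Finset.mem_insert_self i u)

theorem constant_a_sigma_implies_equal {n : ℕ} (hn : 2 ≤ n)
    (a : Fin n → ℝ) (ha : ∀ i, 0 < a i)
    (h : ∀ i j, a i * esym (Finset.univ.erase i) (n - 2) a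
        = a j * esym (Finset.univ.erase j) (n - 2) a) :
    ∀ i j, a i = a j := by
  intro i j
  have hk := key_split hn a i
  have hk' := key_split hn a j
  have hprod : ∏ k ∈ Finset.univ.erase i, a k = ∏ k ∈ Finset.univ.erase j, a k := by
    have := h i j
    linarith [hk, hk']
  have hi : (∏ k ∈ Finset.univ.erase i, a k) * a i = ∏ k, a k :=
    Finset.prod_erase_mul _ _ (Finset.mem_univ i)
  have hj : (∏ k ∈ Finset.univ.erase j, a k) * a j = ∏ k, a k :=
    Finset.prod_erase_mul _ _ (Finset.mem_univ j)
  have hpos : 0 < ∏ k ∈ Finset.univ.erase i, a k :=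
    Finset.prod_pos fun k _ => ha k
  have : (∏ k ∈ Finset.univ.erase i, a k) * a i
      = (∏ k ∈ Finset.univ.erase i, a k) * a j := by
    rw [hi, hprod] at *; rw [hprod]; rw [hj]
  exact mul_left_cancel₀ (ne_of_gt hpos) this
end
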